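/- Let r ≥ 1, N ≥ 3 and 1 ≤ k ≤ (N−1)/2 be integers, and define for t ∈ ℝ the series S(t) = k^{−(1+r)}·sin(k·t) + Σ_{m=1}^∞ [ (m·N+k)^{−(1+r)}·sin((m·N+k)·t) − (−1)^{1+r}·(m·N−k)^{−(1+r)}·sin((m·N−k)·t) ] and the constant H = k^{−(1+r)} + Σ_{m=1}^∞ [ (m·N+k)^{−(1+r)} + (−1)^{1+r}·(m·N−k)^{−(1+r)} ]. Then for every node x_j = 2π(j−1)/N, j = 1,…,N, one has S(x_j) = H·sin(k·x_j). -/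
import Mathlib


/-- At the nodes of the uniform grid `x_j = 2π(j-1)/N`, the sine component
series `S(t)` of the trigonometric interpolation spline of order `r` (with
convergence factor `σ1(r,k) = k^{-(1+r)}`) collapses, by aliasing, to
`H · sin(k x_j)` where `H` is the normalizing constant. -/
theorem sine_component_at_nodes (r N k : ℕ) (hr : 1 ≤ r) (hN : 3 ≤ N)
    (hk1 : 1 ≤ k) (hk2 : k ≤ (N - 1) / 2)
    (S : ℝ → ℝ)
    (hS : ∀ t, S t = 1 / (k : ℝ) ^ (1 + r) * Real.sin ((k : ℝ) * t) +
      ∑' m : ℕ, (1 / (((m : ℝ) + 1) * N + k) ^ (1 + r) *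
            Real.sin ((((m : ℝ) + 1) * N + k) * t) -
          (-1 : ℝ) ^ (1 + r) * (1 / (((m : ℝ) + 1) * N - k) ^ (1 + r) *
            Real.sin ((((m : ℝ) + 1) * N - k) * t))))
    (H : ℝ)
    (hH : H = 1 / (k : ℝ) ^ (1 + r) +
      ∑' m : ℕ, (1 / (((m : ℝ) + 1) * N + k) ^ (1 + r) +
        (-1 : ℝ) ^ (1 + r) * (1 / (((m : ℝ) + 1) * N - k) ^ (1 + r))))
    (x : ℕ → ℝ) (hx : ∀ j, x j = 2 * Real.pi * ((j : ℝ) - 1) / N) :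
    ∀ j ∈ Finset.Icc 1 N, S (x j) = H * Real.sin ((k : ℝ) * x j) := by
  intro j hj
  obtain ⟨hj1, _⟩ := Finset.mem_Icc.mp hj
  have hN0 : (N : ℝ) ≠ 0 := by positivity
  have hjc : ((j - 1 : ℕ) : ℝ) = (j : ℝ) - 1 := by
    push_cast [Nat.cast_sub hj1]; ring
  have key : ∀ m : ℕ, ∀ s : ℝ, (((m : ℝ) + 1) * N + s) * x j
      = s * x j + (((m + 1) * (j - 1) : ℕ) : ℤ) * (2 * Real.pi) := by
    intro m s
    rw [hx]
    push_cast [hjc]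
    field_simp
    ring
  have sin1 : ∀ m : ℕ, Real.sin ((((m : ℝ) + 1) * N + k) * x j)
      = Real.sin ((k : ℝ) * x j) := by
    intro m
    rw [key m k, Real.sin_add_int_mul_two_pi]
  have sin2 : ∀ m : ℕ, Real.sin ((((m : ℝ) + 1) * N - k) * x j)
      = - Real.sin ((k : ℝ) * x j) := by
    intro m
    have : (((m : ℝ) + 1) * N - (k : ℝ)) = (((m : ℝ) + 1) * N + (-(k : ℝ))) := by ring
    rw [this, key m (-(k : ℝ)), Real.sin_add_int_mul_two_pi]
    rw [neg_mul, Real.sin_neg]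
  rw [hS, hH, add_mul]
  congr 1
  have : ∀ m : ℕ, (1 / (((m : ℝ) + 1) * N + k) ^ (1 + r) *
            Real.sin ((((m : ℝ) + 1) * N + k) * x j) -
          (-1 : ℝ) ^ (1 + r) * (1 / (((m : ℝ) + 1) * N - k) ^ (1 + r) *
            Real.sin ((((m : ℝ) + 1) * N - k) * x j)))
      = (1 / (((m : ℝ) + 1) * N + k) ^ (1 + r) +
        (-1 : ℝ) ^ (1 + r) * (1 / (((m : ℝ) + 1) * N - k) ^ (1 + r))) *
          Real.sin ((k : ℝ) * x j) := by
    intro m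
    rw [sin1 m, sin2 m]
    ring
  rw [tsum_congr this, tsum_mul_right]
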